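/- Let q and q' be distinct primes with q ≡ 1 (mod 4) and q' ≡ 1 (mod 4). Then there exist primes p and p', both ≡ 3 (mod 4), such that (p/q) = -1, (p/q') = 1, (p'/q) = 1 and (p'/q') = -1. -/

import Mathlib

lemma kummer_aux (q q' : ℕ) [Fact q.Prime] [Fact q'.Prime] (hne : q ≠ q')
    (hq : q % 4 = 1) (hq' : q' % 4 = 1) :
    ∃ p : ℕ, p.Prime ∧ p % 4 = 3 ∧ legendreSym q (p : ℤ) = -1 ∧ legendreSym q' (p : ℤ) = 1 := by
  have hqp : q.Prime := Fact.out
  have hq'p : q'.Prime := Fact.out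
  -- a nonsquare mod q
  have hchar : ringChar (ZMod q) ≠ 2 := by
    rw [ZMod.ringChar_zmod_n]; omega
  obtain ⟨b, hb⟩ := FiniteField.exists_nonsquare hchar
  have hbne : b ≠ 0 := fun h => hb (h ▸ IsSquare.zero)
  set bn := b.val with hbn
  have hbnlt : bn < q := ZMod.val_lt b
  have hbnne : bn ≠ 0 := fun h => hbne (by
    have : (bn : ZMod q) = b := by simp [hbn, ZMod.natCast_val, ZMod.cast_id]
    rw [← this, h, Nat.cast_zero])
  -- coprimality facts
  have hco4q : Nat.Coprime 4 q := by
    rw [Nat.coprime_comm, hqp.coprime_iff_not_dvd]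
    intro h
    have := Nat.le_of_dvd (by norm_num) h
    have := hqp.two_le
    omega
  have hco4q' : Nat.Coprime 4 q' := by
    rw [Nat.coprime_comm, hq'p.coprime_iff_not_dvd]
    intro h
    have := Nat.le_of_dvd (by norm_num) h
    have := hq'p.two_le
    omega
  have hcoqq' : Nat.Coprime q q' := (Nat.coprime_primes hqp hq'p).mpr hne
  -- CRT
  obtain ⟨k, hk4, hkq⟩ := Nat.chineseRemainder hco4q 3 bn
  have hco4qq' : Nat.Coprime (4 * q) q' := Nat.Coprime.mul hco4q' hcoqq'
  obtain ⟨r, hr4q, hrq'⟩ := Nat.chineseRemainder hco4qq' k 1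
  have hr4 : r ≡ 3 [MOD 4] := (hr4q.of_dvd ⟨q, rfl⟩).trans hk4
  have hrq : r ≡ bn [MOD q] := (hr4q.of_dvd ⟨4, Nat.mul_comm 4 q⟩).trans hkq
  -- modulus
  have hN : (0:ℕ) < 4 * q * q' := by
    have := hqp.pos; have := hq'p.pos; positivity
  haveI : NeZero (4 * q * q') := ⟨hN.ne'⟩
  -- r is a unit mod 4*q*q'
  have hrco : Nat.Coprime r (4 * q * q') := by
    refine Nat.Coprime.mul_right (Nat.Coprime.mul_right ?_ ?_) ?_
    · have hodd : r % 2 = 1 := by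
        have := hr4; unfold Nat.ModEq at this; omega
      have h2 : Nat.Coprime r 2 := by
        rw [Nat.coprime_comm, Nat.Prime.coprime_iff_not_dvd Nat.prime_two]
        omega
      have := h2.pow_right 2
      norm_num at this
      exact this
    · rw [Nat.coprime_comm, hqp.coprime_iff_not_dvd]
      intro h
      have h0 : r % q = 0 := Nat.mod_eq_zero_of_dvd h
      have h1 : r % q = bn % q := hrq
      have h2 : bn % q = bn := Nat.mod_eq_of_lt hbnlt
      omega
    · rw [Nat.coprime_comm, hq'p.coprime_iff_not_dvd]
      intro h
      have h0 : r % q' = 0 := Nat.mod_eq_zero_of_dvd h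
      have h1 : r % q' = 1 % q' := hrq'
      have : 1 % q' = 1 := Nat.mod_eq_of_lt hq'p.one_lt
      omega
  have hu : IsUnit ((r : ZMod (4 * q * q'))) :=
    (ZMod.isUnit_iff_coprime r (4 * q * q')).mpr hrco
  -- Dirichlet
  obtain ⟨p, -, hp, hpr⟩ := Nat.forall_exists_prime_gt_and_eq_mod hu 0
  have hpmod : p ≡ r [MOD 4 * q * q'] := (ZMod.natCast_eq_natCast_iff p r _).mp hpr
  have hp4 : p ≡ 3 [MOD 4] := (hpmod.of_dvd ⟨q * q', by ring⟩).trans hr4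
  have hpq : p ≡ bn [MOD q] := (hpmod.of_dvd ⟨4 * q', by ring⟩).trans hrq
  have hpq' : p ≡ 1 [MOD q'] := (hpmod.of_dvd ⟨4 * q, by ring⟩).trans hrq'
  refine ⟨p, hp, ?_, ?_, ?_⟩
  · have := hp4; unfold Nat.ModEq at this; omega
  · have hcast : ((p : ℕ) : ZMod q) = b := by
      rw [(ZMod.natCast_eq_natCast_iff p bn q).mpr hpq]
      simp [hbn, ZMod.natCast_val, ZMod.cast_id]
    exact (legendreSym.eq_neg_one_iff' q).mpr (hcast ▸ hb)
  · have hcast : ((p : ℕ) : ZMod q') = 1 := by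
      rw [(ZMod.natCast_eq_natCast_iff p 1 q').mpr hpq', Nat.cast_one]
    refine (legendreSym.eq_one_iff' q' ?_).mpr (hcast ▸ IsSquare.one)
    rw [hcast]; exact one_ne_zero

/-- Kummer's third auxiliary lemma: for distinct primes `q ≡ q' ≡ 1 (mod 4)` there are primes
`p ≡ p' ≡ 3 (mod 4)` with `(p/q) = -1`, `(p/q') = 1`, `(p'/q) = 1` and `(p'/q') = -1`. -/
theorem kummer_lemma_three (q q' : ℕ) [Fact q.Prime] [Fact q'.Prime] (hne : q ≠ q')
    (hq : q % 4 = 1) (hq' : q' % 4 = 1) :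
    ∃ p p' : ℕ, p.Prime ∧ p'.Prime ∧ p % 4 = 3 ∧ p' % 4 = 3 ∧
      legendreSym q (p : ℤ) = -1 ∧ legendreSym q' (p : ℤ) = 1 ∧
      legendreSym q (p' : ℤ) = 1 ∧ legendreSym q' (p' : ℤ) = -1 := by
  obtain ⟨p, hp, hp4, h1, h2⟩ := kummer_aux q q' hne hq hq'
  obtain ⟨p', hp', hp'4, h3, h4⟩ := kummer_aux q' q (Ne.symm hne) hq' hq
  exact ⟨p, p', hp, hp', hp4, hp'4, h1, h2, h4, h3⟩
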